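/- arXiv:1710.05996 — 4 statements merged into one kernel-verified Lean document; each statement's English description precedes it below -/
import Mathlib

section
/- Let $a \ge 2$ be an integer, and suppose modules $E_1,\dots,E_a$ and $G_0,G_1,\dots,G_a$ over a Noetherian local ring fit into short exact sequences $0 \to E_i \to G_{i-1} \to G_i \to 0$ for $1 \le i \le a$. If $\operatorname{depth}(G_a) \ge \operatorname{depth}(E_a)$ and $\operatorname{depth}(E_i) \ge \operatorname{depth}(E_{i-1})$ for all $2 \le i \le a$, then $\operatorname{depth}(G_0) = \operatorname{depth}(E_1)$. -/
open RingTheory.Sequence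

/-- The depth of a module `M` over a local ring `R`: the supremum of lengths of (weakly)
regular sequences on `M` consisting of elements of the maximal ideal. -/
noncomputable def mdepth (R : Type*) (M : Type*) [CommRing R] [IsLocalRing R]
    [AddCommGroup M] [Module R M] : ℕ∞ :=
  sSup {d : ℕ∞ | ∃ rs : List R, (∀ r ∈ rs, r ∈ IsLocalRing.maximalIdeal R) ∧
    IsWeaklyRegular M rs ∧ (rs.length : ℕ∞) = d}

theorem colon_bot_singleton_eq {R M : Type*} [CommRing R] [AddCommGroup M] [Module R M]
    (x : M) : (⊥ : Submodule R M).colon {x} = (R ∙ x).annihilator := by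
  ext r
  rw [Submodule.mem_colon_singleton, Submodule.mem_bot, Submodule.mem_annihilator_span_singleton]

theorem isAss_iff' {R M : Type*} [CommRing R] [IsNoetherianRing R] [AddCommGroup M]
    [Module R M] {I : Ideal R} :
    IsAssociatedPrime I M ↔ I.IsPrime ∧ ∃ x : M, I = (R ∙ x).annihilator := by
  simp only [isAssociatedPrime_iff, colon_bot_singleton_eq]

section DepthAux
set_option linter.unusedSectionVars false
open Submodule IsLocalRing


open Submodule

variable {R : Type*} [CommRing R]

section AssFinite
variable [IsNoetherianRing R]

/-- Associated primes of a module are contained in those of a submodule and the quotient. -/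
theorem ass_subset_union {M : Type*} [AddCommGroup M] [Module R M] (N : Submodule R M) :
    associatedPrimes R M ⊆ associatedPrimes R N ∪ associatedPrimes R (M ⧸ N) := by
  rintro p hpa
  obtain ⟨hp, x, rfl⟩ := isAss_iff'.mp hpa
  by_cases hcap : ∃ y ∈ (R ∙ x) ⊓ N, y ≠ 0
  · obtain ⟨y, ⟨hy1, hy2⟩, hy0⟩ := hcap
    obtain ⟨c, rfl⟩ := mem_span_singleton.mp hy1
    left
    refine isAss_iff'.mpr ⟨hp, ⟨c • x, hy2⟩, ?_⟩
    ext r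
    rw [mem_annihilator_span_singleton, mem_annihilator_span_singleton]
    constructor
    · intro hr
      apply Subtype.ext
      show r • (c • x) = 0
      rw [smul_comm, hr, smul_zero]
    · intro hr
      have hr' : (r * c) • x = 0 := by
        have := congrArg Subtype.val hr
        simpa [mul_smul] using this
      have : r * c ∈ (R ∙ x).annihilator := (mem_annihilator_span_singleton _ _).mpr hr'
      rcases hp.mem_or_mem this with h | h
      · exact (mem_annihilator_span_singleton _ _).mp h
      · exact absurd (by rw [(mem_annihilator_span_singleton _ _).mp h]) hy0
  · right
    push_neg at hcap
    refine isAss_iff'.mpr ⟨hp, N.mkQ x, ?_⟩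
    ext r
    rw [mem_annihilator_span_singleton, mem_annihilator_span_singleton]
    constructor
    · intro hr
      show r • N.mkQ x = 0
      rw [← map_smul, hr, map_zero]
    · intro hr
      have hrN : r • x ∈ N := by
        rwa [← Quotient.mk_eq_zero, ← N.mkQ_apply, map_smul]
      exact hcap (r • x) (mem_inf.mpr ⟨smul_mem _ r (mem_span_singleton_self x), hrN⟩)

/-- `R ∙ x` is isomorphic to `R ⧸ ann(x)`. -/
noncomputable def spanSingletonEquiv {M : Type*} [AddCommGroup M] [Module R M] (x : M) :
    (R ⧸ (Submodule.span R {x}).annihilator) ≃ₗ[R] (R ∙ x) :=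
  (Submodule.quotEquivOfEq _ _ (by
    ext r
    rw [LinearMap.mem_ker, mem_annihilator_span_singleton, LinearMap.toSpanSingleton_apply])).symm ≪≫ₗ
  ((LinearMap.toSpanSingleton R M x).quotKerEquivRange ≪≫ₗ
    LinearEquiv.ofEq _ _ (LinearMap.span_singleton_eq_range R M x).symm)

theorem associatedPrimes_finite (M : Type*) [AddCommGroup M] [Module R M] [Module.Finite R M] :
    (associatedPrimes R M).Finite := by
  have : IsNoetherian R M := isNoetherian_of_isNoetherianRing_of_finite R M
  have key : ∀ N : Submodule R M, (associatedPrimes R (M ⧸ N)).Finite := by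
    intro N
    induction N using IsNoetherian.induction with
    | _ N ih =>
      by_cases htriv : Subsingleton (M ⧸ N)
      · rw [associatedPrimes.eq_empty_of_subsingleton]; exact Set.finite_empty
      have : Nontrivial (M ⧸ N) := not_subsingleton_iff_nontrivial.mp htriv
      obtain ⟨p, hp⟩ := associatedPrimes.nonempty R (M ⧸ N)
      obtain ⟨hp1, xb, hxb⟩ := isAss_iff'.mp hp
      have hxb0 : xb ≠ 0 := by
        rintro rfl
        rw [Submodule.span_singleton_eq_bot.mpr rfl, Submodule.annihilator_bot] at hxb
        exact hp1.ne_top hxb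
      -- N' : preimage of R ∙ xb
      set N' : Submodule R M := (R ∙ xb).comap N.mkQ with hN'
      have hNN' : N < N' := by
        refine lt_of_le_of_ne (fun y hy => ?_) (fun heq => ?_)
        · have h0 : N.mkQ y = 0 := by rwa [N.mkQ_apply, Quotient.mk_eq_zero]
          simp only [hN', mem_comap, h0]
          exact zero_mem _
        · obtain ⟨x, hx⟩ := N.mkQ_surjective xb
          have hx' : x ∈ N' := by simp [hN', mem_comap, hx, mem_span_singleton_self]
          rw [← heq] at hx'
          apply hxb0
          rw [← hx, N.mkQ_apply, Quotient.mk_eq_zero]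
          exact hx'
      have hmap : N'.map N.mkQ = (R ∙ xb) := by
        rw [hN', map_comap_eq, range_mkQ, top_inf_eq]
      have hsub := ass_subset_union (R := R) (M := M ⧸ N) (R ∙ xb)
      have e1 : (associatedPrimes R (R ∙ xb)) = associatedPrimes R (R ⧸ p) := by
        rw [hxb]
        exact (LinearEquiv.AssociatedPrimes.eq (spanSingletonEquiv xb)).symm
      have e2 : associatedPrimes R ((M ⧸ N) ⧸ (R ∙ xb)) = associatedPrimes R (M ⧸ N') := by
        rw [← hmap]
        exact LinearEquiv.AssociatedPrimes.eq (quotientQuotientEquivQuotient N N' hNN'.le)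
      apply Set.Finite.subset _ hsub
      apply Set.Finite.union
      · rw [e1]
        have := associatedPrimes.eq_singleton_of_isPrimary (hp1.isPrimary)
        rw [this]
        exact Set.finite_singleton _
      · rw [e2]; exact ih N' hNN'
  have := key ⊥
  rwa [LinearEquiv.AssociatedPrimes.eq (Submodule.quotEquivOfEqBot (⊥ : Submodule R M) rfl)] at this

end AssFinite


variable {R : Type*} [CommRing R] [IsNoetherianRing R] [IsLocalRing R]

theorem not_ass_of_exists_regular {M : Type*} [AddCommGroup M] [Module R M]
    (h : ∃ r ∈ maximalIdeal R, IsSMulRegular M r) :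
    ¬ IsAssociatedPrime (maximalIdeal R) M := by
  intro hass
  obtain ⟨hp, x, hx⟩ := isAss_iff'.mp hass
  obtain ⟨r, hrm, hr⟩ := h
  have hx0 : x ≠ 0 := by
    rintro rfl
    rw [Submodule.span_singleton_eq_bot.mpr rfl, Submodule.annihilator_bot] at hx
    exact hp.ne_top hx
  have : r • x = 0 := (mem_annihilator_span_singleton _ _).mp (hx ▸ hrm)
  exact hx0 (hr (show r • x = r • 0 by rw [this, smul_zero]))

theorem exists_regular_of_not_ass {M : Type*} [AddCommGroup M] [Module R M] [Module.Finite R M]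
    (h : ¬ IsAssociatedPrime (maximalIdeal R) M) :
    ∃ r ∈ maximalIdeal R, IsSMulRegular M r := by
  by_contra hc
  push_neg at hc
  have hfin : (associatedPrimes R M).Finite := associatedPrimes_finite (R := R) M
  have hsub : (maximalIdeal R : Set R) ⊆ ⋃ p ∈ associatedPrimes R M, ↑p := by
    rw [biUnion_associatedPrimes_eq_compl_regular R M]
    intro r hr
    exact hc r hr
  rw [← hfin.coe_toFinset] at hsub
  have := (Ideal.subset_union_prime (⊥ : Ideal R) ⊥ (fun p hp _ _ => by
    have : p ∈ associatedPrimes R M := by rwa [← hfin.mem_toFinset]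
    exact this.isPrime)).mp hsub
  obtain ⟨p, hps, hple⟩ := this
  have hpass : p ∈ associatedPrimes R M := by rwa [← hfin.mem_toFinset]
  have : maximalIdeal R = p :=
    (maximalIdeal.isMaximal R).eq_of_le hpass.isPrime.ne_top hple
  exact h (this ▸ hpass)

theorem isSMulRegular_prod_iff {M N : Type*} [AddCommGroup M] [Module R M]
    [AddCommGroup N] [Module R N] (r : R) :
    IsSMulRegular (M × N) r ↔ IsSMulRegular M r ∧ IsSMulRegular N r := by
  constructor
  · intro h
    constructor
    · intro x y hxy
      have := @h (x, 0) (y, 0) (by simpa using hxy)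
      simpa using congrArg Prod.fst this
    · intro x y hxy
      have := @h (0, x) (0, y) (by simpa using hxy)
      simpa using congrArg Prod.snd this
  · rintro ⟨h1, h2⟩ ⟨x1, x2⟩ ⟨y1, y2⟩ h
    have h' : (r • x1, r • x2) = (r • y1, r • y2) := h
    exact Prod.ext (h1 (congrArg Prod.fst h')) (h2 (congrArg Prod.snd h'))

theorem ass_max_of_kill {A : Type*} [AddCommGroup A] [Module R A] (z : A) (hz : z ≠ 0)
    (hk : ∀ r ∈ maximalIdeal R, r • z = 0) : IsAssociatedPrime (maximalIdeal R) A := by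
  have hle : maximalIdeal R ≤ (R ∙ z).annihilator := fun r hr =>
    (mem_annihilator_span_singleton _ _).mpr (hk r hr)
  have hnt : (R ∙ z).annihilator ≠ ⊤ := by
    intro htop
    rw [Submodule.annihilator_eq_top_iff, Submodule.span_singleton_eq_bot] at htop
    exact hz htop
  exact isAss_iff'.mpr ⟨(maximalIdeal.isMaximal R).isPrime, z, (maximalIdeal.isMaximal R).eq_of_le hnt hle⟩

theorem not_ass_prod {M N : Type*} [AddCommGroup M] [Module R M]
    [AddCommGroup N] [Module R N]
    (hM : ¬ IsAssociatedPrime (maximalIdeal R) M)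
    (hN : ¬ IsAssociatedPrime (maximalIdeal R) N) :
    ¬ IsAssociatedPrime (maximalIdeal R) (M × N) := by
  intro hass
  obtain ⟨hp, ⟨x, y⟩, hxy⟩ := isAss_iff'.mp hass
  have hne : ¬ ((x, y) = (0 : M × N)) := by
    intro h0
    rw [h0, Submodule.span_singleton_eq_bot.mpr rfl, Submodule.annihilator_bot] at hxy
    exact hp.ne_top hxy
  have hkill : ∀ r ∈ maximalIdeal R, r • x = 0 ∧ r • y = 0 := by
    intro r hr
    have : r • (x, y) = 0 := (mem_annihilator_span_singleton _ _).mp (hxy ▸ hr)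
    exact ⟨congrArg Prod.fst this, congrArg Prod.snd this⟩
  by_cases hx0 : x = 0
  · exact hN (ass_max_of_kill y (fun h => hne (by simp [hx0, h])) (fun r hr => (hkill r hr).2))
  · exact hM (ass_max_of_kill x hx0 (fun r hr => (hkill r hr).1))

section DGE
open RingTheory.Sequence

variable (R : Type*) [CommRing R] [IsLocalRing R]

/-- Depth at least `n`: there is a weakly regular sequence of length `n` in the maximal ideal. -/
def dge (M : Type*) [AddCommGroup M] [Module R M] (n : ℕ) : Prop :=
  ∃ rs : List R, (∀ r ∈ rs, r ∈ maximalIdeal R) ∧ IsWeaklyRegular M rs ∧ rs.length = n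

variable {R}
variable {M N : Type*} [AddCommGroup M] [Module R M] [AddCommGroup N] [Module R N]

theorem dge_zero : dge R M 0 := ⟨[], by simp, IsWeaklyRegular.nil R M, rfl⟩

theorem dge_congr (e : M ≃ₗ[R] N) {n : ℕ} (h : dge R M n) : dge R N n := by
  obtain ⟨rs, h1, h2, h3⟩ := h
  exact ⟨rs, h1, (e.isWeaklyRegular_congr rs).mp h2, h3⟩

theorem isWeaklyRegular_replicate_zero :
    ∀ (n : ℕ) (M : Type*) [AddCommGroup M] [Module R M] [Subsingleton M],
      IsWeaklyRegular M (List.replicate n (0 : R)) := by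
  intro n
  induction n with
  | zero => intro M _ _ _; exact IsWeaklyRegular.nil R M
  | succ k ih =>
    intro M _ _ _
    rw [List.replicate_succ, isWeaklyRegular_cons_iff]
    have : Subsingleton (QuotSMulTop (0 : R) M) := (Submodule.mkQ_surjective _).subsingleton
    exact ⟨fun a b _ => Subsingleton.elim a b, ih _⟩

theorem dge_of_subsingleton [Subsingleton M] (n : ℕ) : dge R M n :=
  ⟨List.replicate n 0, by simp, isWeaklyRegular_replicate_zero n M, by simp⟩

theorem dge_mono {n k : ℕ} (h : dge R M n) (hk : k ≤ n) : dge R M k := by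
  obtain ⟨rs, h1, h2, h3⟩ := h
  refine ⟨rs.take k, fun r hr => h1 r (List.mem_of_mem_take hr), ?_, by simp [h3, hk]⟩
  rw [← List.take_append_drop k rs, isWeaklyRegular_append_iff] at h2
  exact h2.1

theorem dge_cons {r : R} (hrm : r ∈ maximalIdeal R) (hr : IsSMulRegular M r) {n : ℕ}
    (h : dge R (QuotSMulTop r M) n) : dge R M (n + 1) := by
  obtain ⟨rs, h1, h2, h3⟩ := h
  refine ⟨r :: rs, fun s hs => ?_, IsWeaklyRegular.cons hr h2, by simp [h3]⟩
  rcases List.mem_cons.mp hs with rfl | h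
  · exact hrm
  · exact h1 s h

theorem dge_dest {n : ℕ} (h : dge R M (n + 1)) :
    ∃ r ∈ maximalIdeal R, IsSMulRegular M r ∧ dge R (QuotSMulTop r M) n := by
  obtain ⟨rs, h1, h2, h3⟩ := h
  match rs, h3 with
  | r :: rs', h3 =>
    rw [isWeaklyRegular_cons_iff] at h2
    exact ⟨r, h1 r (by simp), h2.1, rs', fun s hs => h1 s (by simp [hs]), h2.2, by simpa using h3⟩

theorem dge_one_iff : dge R M 1 ↔ ∃ r ∈ maximalIdeal R, IsSMulRegular M r := by
  constructor
  · intro h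
    obtain ⟨r, h1, h2, _⟩ := dge_dest h
    exact ⟨r, h1, h2⟩
  · rintro ⟨r, h1, h2⟩
    exact dge_cons h1 h2 dge_zero

end DGE

section QuotComm
open RingTheory.Sequence Pointwise

variable {R : Type*} [CommRing R]
variable {M : Type*} [AddCommGroup M] [Module R M]

theorem smul_top_quot_eq_bot (x : R) :
    (x • ⊤ : Submodule R (QuotSMulTop x M)) = ⊥ := by
  rw [eq_bot_iff]
  intro z hz
  have hz' : z ∈ x • ((⊤ : Submodule R (QuotSMulTop x M)) : Set (QuotSMulTop x M)) := by
    rw [← Submodule.coe_pointwise_smul]; exact hz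
  obtain ⟨w, -, rfl⟩ := Set.mem_smul_set.mp hz'
  obtain ⟨w', rfl⟩ := Submodule.mkQ_surjective _ w
  rw [Submodule.mem_bot, ← map_smul, Submodule.mkQ_apply, Submodule.Quotient.mk_eq_zero]
  exact Submodule.smul_mem_pointwise_smul w' x ⊤ trivial

/-- `(M/xM)/y(M/xM) ≃ M/(xM + yM)`. -/
noncomputable def quotQuotEquiv (x y : R) :
    QuotSMulTop y (QuotSMulTop x M) ≃ₗ[R] M ⧸ (x • ⊤ ⊔ y • (⊤ : Submodule R M)) :=
  have h : Submodule.map (x • (⊤ : Submodule R M)).mkQ (x • ⊤ ⊔ y • ⊤)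
      = (y • ⊤ : Submodule R (QuotSMulTop x M)) := by
    rw [Submodule.map_sup, Submodule.map_pointwise_smul, Submodule.map_pointwise_smul,
      Submodule.map_top, Submodule.range_mkQ, smul_top_quot_eq_bot, bot_sup_eq]
  (Submodule.quotEquivOfEq _ _ h.symm) ≪≫ₗ
    Submodule.quotientQuotientEquivQuotient (x • ⊤) (x • ⊤ ⊔ y • ⊤) le_sup_left

/-- Commuting two quotients. -/
noncomputable def quotSMulTopComm (x y : R) :
    QuotSMulTop y (QuotSMulTop x M) ≃ₗ[R] QuotSMulTop x (QuotSMulTop y M) :=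
  quotQuotEquiv x y ≪≫ₗ (Submodule.quotEquivOfEq _ _ (sup_comm _ _)) ≪≫ₗ
    (quotQuotEquiv y x).symm

end QuotComm

section DepthDrop
open RingTheory.Sequence Pointwise

variable {R : Type*} [CommRing R] [IsNoetherianRing R] [IsLocalRing R]

theorem mem_smul_top_iff' {M : Type*} [AddCommGroup M] [Module R M] (x : R) (z : M) :
    z ∈ (x • ⊤ : Submodule R M) ↔ ∃ w, x • w = z := by
  constructor
  · intro hz
    have hz' : z ∈ x • ((⊤ : Submodule R M) : Set M) := by
      rw [← Submodule.coe_pointwise_smul]; exact hz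
    obtain ⟨w, -, rfl⟩ := Set.mem_smul_set.mp hz'
    exact ⟨w, rfl⟩
  · rintro ⟨w, rfl⟩
    exact Submodule.smul_mem_pointwise_smul w x ⊤ trivial

theorem not_ass_of_dge_one {M : Type*} [AddCommGroup M] [Module R M] (h : dge R M 1) :
    ¬ IsAssociatedPrime (IsLocalRing.maximalIdeal R) M :=
  not_ass_of_exists_regular (dge_one_iff.mp h)

theorem exists_common_regular₂ {A : Type*} {B : Type*}
    [AddCommGroup A] [Module R A] [Module.Finite R A]
    [AddCommGroup B] [Module R B] [Module.Finite R B]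
    (hA : ¬ IsAssociatedPrime (IsLocalRing.maximalIdeal R) A)
    (hB : ¬ IsAssociatedPrime (IsLocalRing.maximalIdeal R) B) :
    ∃ r ∈ IsLocalRing.maximalIdeal R, IsSMulRegular A r ∧ IsSMulRegular B r := by
  obtain ⟨r, hrm, hr⟩ := exists_regular_of_not_ass (M := A × B) (not_ass_prod hA hB)
  exact ⟨r, hrm, (isSMulRegular_prod_iff r).mp hr⟩

theorem exists_common_regular₃ {A : Type*} {B : Type*} {C : Type*}
    [AddCommGroup A] [Module R A] [Module.Finite R A]
    [AddCommGroup B] [Module R B] [Module.Finite R B]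
    [AddCommGroup C] [Module R C] [Module.Finite R C]
    (hA : ¬ IsAssociatedPrime (IsLocalRing.maximalIdeal R) A)
    (hB : ¬ IsAssociatedPrime (IsLocalRing.maximalIdeal R) B)
    (hC : ¬ IsAssociatedPrime (IsLocalRing.maximalIdeal R) C) :
    ∃ r ∈ IsLocalRing.maximalIdeal R,
      IsSMulRegular A r ∧ IsSMulRegular B r ∧ IsSMulRegular C r := by
  obtain ⟨r, hrm, hr⟩ := exists_regular_of_not_ass (M := A × B × C)
    (not_ass_prod hA (not_ass_prod hB hC))
  rw [isSMulRegular_prod_iff, isSMulRegular_prod_iff] at hr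
  exact ⟨r, hrm, hr.1, hr.2.1, hr.2.2⟩

/-- If `depth M ≥ 2` and `r` is regular, then `M/rM` has positive depth. -/
theorem not_ass_quot_of_dge_two {M : Type*} [AddCommGroup M] [Module R M]
    (h2 : dge R M 2) {r : R} (hr : IsSMulRegular M r) :
    ¬ IsAssociatedPrime (IsLocalRing.maximalIdeal R) (QuotSMulTop r M) := by
  intro hass
  obtain ⟨hp, u, hu⟩ := isAss_iff'.mp hass
  obtain ⟨x₁, hx₁m, hx₁, hd₁⟩ := dge_dest h2
  obtain ⟨x₂, hx₂m, hx₂, -⟩ := dge_dest hd₁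
  have hu0 : u ≠ 0 := by
    rintro rfl
    rw [Submodule.span_singleton_eq_bot.mpr rfl, Submodule.annihilator_bot] at hu
    exact hp.ne_top hu
  obtain ⟨u₀, rfl⟩ := Submodule.mkQ_surjective _ u
  have hkill : ∀ s ∈ IsLocalRing.maximalIdeal R, ∃ v, r • v = s • u₀ := by
    intro s hs
    have : s • (Submodule.mkQ _ u₀) = 0 :=
      (Submodule.mem_annihilator_span_singleton _ _).mp (hu ▸ hs)
    rw [← map_smul, Submodule.mkQ_apply, Submodule.Quotient.mk_eq_zero] at this
    exact (mem_smul_top_iff' r _).mp this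
  obtain ⟨v₁, hv₁⟩ := hkill x₁ hx₁m
  obtain ⟨v₂, hv₂⟩ := hkill x₂ hx₂m
  have key : x₂ • v₁ = x₁ • v₂ := by
    apply hr
    show r • (x₂ • v₁) = r • (x₁ • v₂)
    rw [smul_comm r x₂, hv₁, smul_comm x₂ x₁, smul_comm r x₁, hv₂, smul_comm x₁ x₂]
  have hv₁mem : v₁ ∈ (x₁ • ⊤ : Submodule R M) := by
    have : x₂ • (Submodule.mkQ (x₁ • ⊤ : Submodule R M) v₁) = 0 := by
      rw [← map_smul, key, Submodule.mkQ_apply, Submodule.Quotient.mk_eq_zero]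
      exact Submodule.smul_mem_pointwise_smul v₂ x₁ ⊤ trivial
    have h0 := hx₂ (show x₂ • (Submodule.mkQ _ v₁) = x₂ • 0 by rw [this, smul_zero])
    rwa [Submodule.mkQ_apply, Submodule.Quotient.mk_eq_zero] at h0
  obtain ⟨w, hw⟩ := (mem_smul_top_iff' x₁ v₁).mp hv₁mem
  have : u₀ = r • w := by
    apply hx₁
    show x₁ • u₀ = x₁ • (r • w)
    rw [← hv₁, ← hw, smul_comm x₁ r]
  apply hu0
  rw [Submodule.mkQ_apply, Submodule.Quotient.mk_eq_zero, this]
  exact Submodule.smul_mem_pointwise_smul w r ⊤ trivial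

/-- Depth drops by at most one when quotienting by a regular element. -/
theorem dge_quot : ∀ (k : ℕ) (M : Type*) [AddCommGroup M] [Module R M] [Module.Finite R M]
    (r : R), r ∈ IsLocalRing.maximalIdeal R → IsSMulRegular M r → dge R M (k + 1) →
    dge R (QuotSMulTop r M) k := by
  intro k
  induction k with
  | zero => intro M _ _ _ r _ _ _; exact dge_zero
  | succ k ih =>
    intro M _ _ _ r hrm hr hd
    obtain ⟨x₁, hx₁m, hx₁, hd₁⟩ := dge_dest hd
    have hS : ¬ IsAssociatedPrime (IsLocalRing.maximalIdeal R) (QuotSMulTop r M) :=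
      not_ass_quot_of_dge_two (dge_mono hd (by omega)) hr
    have hM1 : ¬ IsAssociatedPrime (IsLocalRing.maximalIdeal R) M :=
      not_ass_of_exists_regular ⟨x₁, hx₁m, hx₁⟩
    have hQ1 : ¬ IsAssociatedPrime (IsLocalRing.maximalIdeal R) (QuotSMulTop x₁ M) :=
      not_ass_of_dge_one (dge_mono hd₁ (by omega))
    obtain ⟨y, hym, hyM, hyr, hyx₁⟩ := exists_common_regular₃ hM1 hS hQ1
    -- dge ((M/x₁)/y) k
    have h1 : dge R (QuotSMulTop y (QuotSMulTop x₁ M)) k := ih _ y hym hyx₁ hd₁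
    -- x₁ is regular on M/yM
    have hseq : IsWeaklyRegular M [x₁, y] :=
      IsWeaklyRegular.cons hx₁ ((isWeaklyRegular_singleton_iff _ _).mpr hyx₁)
    have hperm : IsWeaklyRegular M [y, x₁] :=
      IsLocalRing.isWeaklyRegular_of_perm_of_subset_maximalIdeal hseq
        (List.Perm.swap y x₁ []) (by
          intro s hs
          rcases List.mem_cons.mp hs with rfl | hs'
          · exact hx₁m
          · rcases List.mem_cons.mp hs' with rfl | hs''
            · exact hym
            · simp at hs'')
    rw [isWeaklyRegular_cons_iff, isWeaklyRegular_singleton_iff] at hperm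
    have hx₁y : IsSMulRegular (QuotSMulTop y M) x₁ := hperm.2
    -- dge (M/yM) (k+1)
    have h3 : dge R (QuotSMulTop y M) (k + 1) :=
      dge_cons hx₁m hx₁y (dge_congr (quotSMulTopComm x₁ y) h1)
    -- r is regular on M/yM
    have hseq' : IsWeaklyRegular M [r, y] :=
      IsWeaklyRegular.cons hr ((isWeaklyRegular_singleton_iff _ _).mpr hyr)
    have hperm' : IsWeaklyRegular M [y, r] :=
      IsLocalRing.isWeaklyRegular_of_perm_of_subset_maximalIdeal hseq'
        (List.Perm.swap y r []) (by
          intro s hs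
          rcases List.mem_cons.mp hs with rfl | hs'
          · exact hrm
          · rcases List.mem_cons.mp hs' with rfl | hs''
            · exact hym
            · simp at hs'')
    rw [isWeaklyRegular_cons_iff, isWeaklyRegular_singleton_iff] at hperm'
    have hry : IsSMulRegular (QuotSMulTop y M) r := hperm'.2
    -- conclude
    have h4 : dge R (QuotSMulTop r (QuotSMulTop y M)) k := ih _ r hrm hry h3
    exact dge_cons hym hyr (dge_congr (quotSMulTopComm y r) h4)

end DepthDrop

section SES
open RingTheory.Sequence Pointwise Function

variable {R : Type*} [CommRing R] [IsNoetherianRing R] [IsLocalRing R]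

theorem ses_quot {E G' G : Type*} [AddCommGroup E] [Module R E]
    [AddCommGroup G'] [Module R G'] [AddCommGroup G] [Module R G]
    {f : E →ₗ[R] G'} {g : G' →ₗ[R] G}
    (hf : Injective f) (hg : Surjective g) (hfg : LinearMap.range f = LinearMap.ker g)
    {r : R} (hrG : IsSMulRegular G r) :
    Injective (QuotSMulTop.map r f) ∧ Surjective (QuotSMulTop.map r g) ∧
      LinearMap.range (QuotSMulTop.map r f) = LinearMap.ker (QuotSMulTop.map r g) := by
  have hex : Exact f g := LinearMap.exact_iff.mpr hfg.symm
  have hinj : Injective (QuotSMulTop.map r f) := by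
    have h0 : Exact (0 : PUnit.{1} →ₗ[R] E) f := by
      rw [LinearMap.exact_iff, LinearMap.range_zero]
      exact LinearMap.ker_eq_bot.mpr hf
    have hthis := QuotSMulTop.map_first_exact_on_four_term_exact_of_isSMulRegular_last
      (f₁ := (0 : PUnit.{1} →ₗ[R] E)) (f₂ := f) (f₃ := g) h0 hex hrG
    rw [map_zero] at hthis
    rw [← LinearMap.ker_eq_bot, LinearMap.exact_iff.mp hthis, LinearMap.range_zero]
  have hmid : Exact (QuotSMulTop.map r f) (QuotSMulTop.map r g) := by
    have h0 : Exact g (0 : G →ₗ[R] PUnit.{1}) := by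
      rw [LinearMap.exact_iff, LinearMap.ker_zero]
      exact (LinearMap.range_eq_top.mpr hg).symm
    have hP : IsSMulRegular PUnit.{1} r := fun a b _ => Subsingleton.elim a b
    exact QuotSMulTop.map_first_exact_on_four_term_exact_of_isSMulRegular_last hex h0 hP
  exact ⟨hinj, QuotSMulTop.map_surjective r hg, (LinearMap.exact_iff.mp hmid).symm⟩

end SES

section SESDepth
open RingTheory.Sequence Pointwise Function

variable {R : Type*} [CommRing R] [IsNoetherianRing R] [IsLocalRing R]

universe u₁ u₂ u₃

theorem dge_middle : ∀ (n : ℕ) {E : Type u₁} {G' : Type u₂} {G : Type u₃}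
    [AddCommGroup E] [Module R E] [Module.Finite R E]
    [AddCommGroup G'] [Module R G'] [Module.Finite R G']
    [AddCommGroup G] [Module R G] [Module.Finite R G]
    {f : E →ₗ[R] G'} {g : G' →ₗ[R] G},
    Injective f → Surjective g → LinearMap.range f = LinearMap.ker g →
    dge R E n → dge R G n → dge R G' n := by
  intro n
  induction n with
  | zero => intros; exact dge_zero
  | succ k ih =>
    intro E G' G _ _ _ _ _ _ _ _ _ f g hf hg hfg hE hG
    have hEa := not_ass_of_dge_one (dge_mono hE (by omega))
    have hGa := not_ass_of_dge_one (dge_mono hG (by omega))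
    obtain ⟨r, hrm, hrE, hrG⟩ := exists_common_regular₂ hEa hGa
    have hrG' : IsSMulRegular G' r := isSMulRegular_of_range_eq_ker hf hfg hrE hrG
    obtain ⟨hinj, hsurj, hrk⟩ := ses_quot hf hg hfg hrG
    exact dge_cons hrm hrG'
      (ih hinj hsurj hrk (dge_quot k E r hrm hrE hE) (dge_quot k G r hrm hrG hG))

theorem dge_left : ∀ (n : ℕ) {E : Type u₁} {G' : Type u₂} {G : Type u₃}
    [AddCommGroup E] [Module R E] [Module.Finite R E]
    [AddCommGroup G'] [Module R G'] [Module.Finite R G']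
    [AddCommGroup G] [Module R G] [Module.Finite R G]
    {f : E →ₗ[R] G'} {g : G' →ₗ[R] G},
    Injective f → Surjective g → LinearMap.range f = LinearMap.ker g →
    dge R G' (n + 1) → dge R G n → dge R E (n + 1) := by
  intro n
  induction n with
  | zero =>
    intro E G' G _ _ _ _ _ _ _ _ _ f g hf hg hfg hG' hG
    obtain ⟨r, hrm, hrG'⟩ := dge_one_iff.mp hG'
    exact dge_one_iff.mpr ⟨r, hrm, hrG'.of_injective f hf⟩
  | succ k ih =>
    intro E G' G _ _ _ _ _ _ _ _ _ f g hf hg hfg hG' hG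
    have hEa : ¬ IsAssociatedPrime (IsLocalRing.maximalIdeal R) E := by
      obtain ⟨r, hrm, hrG'⟩ := dge_one_iff.mp (dge_mono hG' (by omega))
      exact not_ass_of_exists_regular ⟨r, hrm, hrG'.of_injective f hf⟩
    have hG'a := not_ass_of_dge_one (dge_mono hG' (by omega))
    have hGa := not_ass_of_dge_one (dge_mono hG (by omega))
    obtain ⟨r, hrm, hrE, hrG', hrG⟩ := exists_common_regular₃ hEa hG'a hGa
    obtain ⟨hinj, hsurj, hrk⟩ := ses_quot hf hg hfg hrG
    exact dge_cons hrm hrE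
      (ih hinj hsurj hrk (dge_quot (k + 1) G' r hrm hrG' hG') (dge_quot k G r hrm hrG hG))

end SESDepth

section MDepth
open RingTheory.Sequence

variable {R : Type*} [CommRing R] [IsLocalRing R]
variable {M : Type*} [AddCommGroup M] [Module R M]

theorem le_mdepth_iff_dge {n : ℕ} : (n : ℕ∞) ≤ mdepth R M ↔ dge R M n := by
  constructor
  · intro h
    rcases Nat.eq_zero_or_pos n with rfl | hn
    · exact dge_zero
    by_contra hc
    have hb : ∀ d ∈ {d : ℕ∞ | ∃ rs : List R, (∀ r ∈ rs, r ∈ IsLocalRing.maximalIdeal R) ∧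
        IsWeaklyRegular M rs ∧ (rs.length : ℕ∞) = d}, d ≤ ((n - 1 : ℕ) : ℕ∞) := by
      rintro d ⟨rs, h1, h2, rfl⟩
      have hlen : rs.length ≤ n - 1 := by
        by_contra hl
        exact hc (dge_mono ⟨rs, h1, h2, rfl⟩ (by omega))
      exact_mod_cast hlen
    have := le_trans h (sSup_le hb)
    have hn' : n ≤ n - 1 := by exact_mod_cast this
    omega
  · rintro ⟨rs, h1, h2, h3⟩
    exact le_sSup ⟨rs, h1, h2, by rw [h3]⟩

theorem dge_of_le_mdepth {n : ℕ} (h : (n : ℕ∞) ≤ mdepth R M) : dge R M n :=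
  le_mdepth_iff_dge.mp h

end MDepth

section Main
open RingTheory.Sequence Function

variable {R : Type*} [CommRing R] [IsNoetherianRing R] [IsLocalRing R]

theorem mdepth_eq_of_ses {E : Type*} {G' : Type*} {G : Type*}
    [AddCommGroup E] [Module R E] [Module.Finite R E]
    [AddCommGroup G'] [Module R G'] [Module.Finite R G']
    [AddCommGroup G] [Module R G] [Module.Finite R G]
    {f : E →ₗ[R] G'} {g : G' →ₗ[R] G}
    (hf : Injective f) (hg : Surjective g) (hfg : LinearMap.range f = LinearMap.ker g)
    (hGE : mdepth R E ≤ mdepth R G) : mdepth R G' = mdepth R E := by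
  apply le_antisymm
  · by_contra hlt'
    rw [not_le] at hlt'
    have hne : mdepth R E ≠ ⊤ := ne_top_of_lt hlt'
    obtain ⟨k, hk⟩ := WithTop.ne_top_iff_exists.mp hne
    have h1 : dge R G' (k + 1) := by
      apply dge_of_le_mdepth
      have : mdepth R E + 1 ≤ mdepth R G' := ENat.add_one_le_iff hne |>.mpr hlt'
      rw [← hk] at this
      exact_mod_cast this
    have h2 : dge R G k := dge_of_le_mdepth (le_trans (le_of_eq hk) hGE)
    have h3 : dge R E (k + 1) := dge_left k hf hg hfg h1 h2
    have h4 := le_mdepth_iff_dge.mpr h3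
    rw [← hk] at h4
    exact absurd (Nat.cast_le.mp h4) (by omega)
  · apply sSup_le
    rintro d ⟨rs, hmem, hreg, rfl⟩
    have hdE : dge R E rs.length := ⟨rs, hmem, hreg, rfl⟩
    have hdG : dge R G rs.length :=
      dge_of_le_mdepth (le_trans (le_mdepth_iff_dge.mpr hdE) hGE)
    exact le_mdepth_iff_dge.mpr (dge_middle _ hf hg hfg hdE hdG)

end Main

end DepthAux

/-- Given a chain of short exact sequences `0 → E i → G i → G (i+1) → 0` (for `i = 0,…,a-1`,
corresponding to `E_1,…,E_a` and `G_0,…,G_a` in 1-based indexing) of finitely generated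
modules over a Noetherian local ring, if `depth (G a) ≥ depth (E a)` and the depths of the
`E i` are increasing, then `depth (G 0) = depth (E 1)`. -/
theorem stmt3 (R : Type*) [CommRing R] [IsNoetherianRing R] [IsLocalRing R]
    (a : ℕ) (ha : 2 ≤ a)
    (E : Fin a → Type*) [∀ i, AddCommGroup (E i)] [∀ i, Module R (E i)]
    [∀ i, Module.Finite R (E i)]
    (G : Fin (a + 1) → Type*) [∀ i, AddCommGroup (G i)] [∀ i, Module R (G i)]
    [∀ i, Module.Finite R (G i)]
    (f : ∀ i : Fin a, E i →ₗ[R] G i.castSucc)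
    (g : ∀ i : Fin a, G i.castSucc →ₗ[R] G i.succ)
    (hf : ∀ i, Function.Injective (f i)) (hg : ∀ i, Function.Surjective (g i))
    (hfg : ∀ i, LinearMap.range (f i) = LinearMap.ker (g i))
    (hlast : mdepth R (G (Fin.last a)) ≥ mdepth R (E ⟨a - 1, by omega⟩))
    (hmono : ∀ i : Fin a, ∀ h : (i : ℕ) + 1 < a,
      mdepth R (E ⟨(i : ℕ) + 1, h⟩) ≥ mdepth R (E i)) :
    mdepth R (G 0) = mdepth R (E ⟨0, by omega⟩) := by
  have step : ∀ i : Fin a, mdepth R (E i) ≤ mdepth R (G i.succ) →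
      mdepth R (G i.castSucc) = mdepth R (E i) := fun i h =>
    mdepth_eq_of_ses (hf i) (hg i) (hfg i) h
  have P : ∀ k (j : ℕ) (hj : j < a), j + k = a - 1 →
      mdepth R (E ⟨j, hj⟩) ≤ mdepth R (G (Fin.succ ⟨j, hj⟩)) := by
    intro k
    induction k with
    | zero =>
      intro j hj hjk
      have hja : j = a - 1 := by omega
      subst hja
      have hidx : Fin.succ (⟨a - 1, hj⟩ : Fin a) = Fin.last a := by
        ext; simp; omega
      rw [hidx]
      exact hlast
    | succ k ih =>
      intro j hj hjk
      have h1 := ih (j + 1) (by omega) (by omega)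
      have h2 := step ⟨j + 1, by omega⟩ h1
      have h3 := hmono ⟨j, hj⟩ (by simp only [Fin.val_mk]; omega)
      have hidx : (Fin.castSucc (⟨j + 1, by omega⟩ : Fin a)) = Fin.succ ⟨j, hj⟩ := by
        ext; simp
      calc mdepth R (E ⟨j, hj⟩) ≤ mdepth R (E ⟨j + 1, by omega⟩) := h3
        _ = mdepth R (G (Fin.castSucc ⟨j + 1, by omega⟩)) := h2.symm
        _ = mdepth R (G (Fin.succ ⟨j, hj⟩)) := by rw [hidx]
  have P0 := P (a - 1) 0 (by omega) (by omega)
  have hfin := step ⟨0, by omega⟩ P0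
  have hidx0 : (Fin.castSucc (⟨0, by omega⟩ : Fin a)) = (0 : Fin (a + 1)) := by
    ext; simp
  rw [hidx0] at hfin
  exact hfin
end

section
/- Let $k \ge 2$, $0 \le i \le k-1$, and $n \ge 3k+2$. In $S = K[x_1,\dots,x_n]$, the colon ideal $(I(P_n^k) : x_{n-k+i})$ equals $I(P_{n-2k-1+i}^k)S + B_{n-k+i}$, where $B_{n-k+i} = (x_{n-2k+i}, x_{n-2k+i+1}, \dots, x_{n-k+i-1}, x_{n-k+i+1}, \dots, x_n)$. -/
open MvPolynomial

/-- The edge ideal of the `k`-th power of the path on `n` vertices in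
`S = K[x_1,…,x_n]` (the variable `X t` for `t : Fin n` is `x_{t+1}` in 1-based labels):
generated by the `x_i x_j` with `0 < j - i ≤ k`. -/
noncomputable def pathIdeal (K : Type*) [Field K] (n k : ℕ) :
    Ideal (MvPolynomial (Fin n) K) :=
  Ideal.span {m | ∃ i j : Fin n, (i : ℕ) < j ∧ (j : ℕ) - i ≤ k ∧ m = X i * X j}

/-- The edge ideal of the `k`-th power of the cycle on `n` vertices in `K[x_1,…,x_n]`. -/
noncomputable def cycleIdeal (K : Type*) [Field K] (n k : ℕ) :
    Ideal (MvPolynomial (Fin n) K) :=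
  Ideal.span {m | ∃ i j : Fin n, (i : ℕ) < j ∧ ((j : ℕ) - i ≤ k ∨ n - k ≤ (j : ℕ) - i) ∧
    m = X i * X j}

/-- The edge ideal, regarded in `K[x_1,…,x_n]`, of the `k`-th power of the path on the
consecutive vertices with 1-based labels `a,…,b`. -/
noncomputable def pathIdealOn (K : Type*) [Field K] (n k a b : ℕ) :
    Ideal (MvPolynomial (Fin n) K) :=
  Ideal.span {m | ∃ i j : Fin n, a ≤ (i : ℕ) + 1 ∧ (j : ℕ) + 1 ≤ b ∧ (i : ℕ) < j ∧
    (j : ℕ) - i ≤ k ∧ m = X i * X j}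

/-- The monomial prime ideal `(x_a, x_{a+1}, …, x_b)` of `K[x_1,…,x_n]` (1-based labels). -/
noncomputable def varSpan (K : Type*) [Field K] (n a b : ℕ) :
    Ideal (MvPolynomial (Fin n) K) :=
  Ideal.span {m | ∃ t : Fin n, a ≤ (t : ℕ) + 1 ∧ (t : ℕ) + 1 ≤ b ∧ m = X t}

/-- The depth of `S/I` with respect to the maximal graded ideal `(x_1,…,x_n)`:
the supremum of lengths of (weakly) regular sequences on `S/I` from `(x_1,…,x_n)`. -/
noncomputable def pdepth {K : Type*} [Field K] {n : ℕ} (I : Ideal (MvPolynomial (Fin n) K)) :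
    ℕ∞ :=
  sSup {d : ℕ∞ | ∃ rs : List (MvPolynomial (Fin n) K),
    (∀ r ∈ rs, r ∈ Ideal.span (Set.range (X (R := K) (σ := Fin n)))) ∧
    RingTheory.Sequence.IsWeaklyRegular (MvPolynomial (Fin n) K ⧸ I) rs ∧
    (rs.length : ℕ∞) = d}

/-- The set of exponent vectors of monomials belonging to a (monomial) ideal `I`. -/
def monSet {K : Type*} [Field K] {n : ℕ} (I : Ideal (MvPolynomial (Fin n) K)) :
    Set (Fin n → ℕ) :=
  {a | (∏ i, X i ^ a i : MvPolynomial (Fin n) K) ∈ I}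

/-- The set of exponent vectors of the monomials of the Stanley space `x^a K[W]`. -/
def stanleyInterval {n : ℕ} (a : Fin n → ℕ) (W : Finset (Fin n)) : Set (Fin n → ℕ) :=
  {c | (∀ i, a i ≤ c i) ∧ ∀ i ∉ W, c i = a i}

/-- The Stanley depth of `J/I` for monomial ideals `I ⊆ J` of `K[x_1,…,x_n]`: the largest
`d` such that the monomials of `J \ I` can be partitioned into finitely many Stanley spaces
`x^a K[W]` with `|W| ≥ d` (by Herzog–Vladoiu–Zheng this agrees with the Stanley depth of the
`ℤⁿ`-graded module `J/I` defined via Stanley decompositions). -/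
noncomputable def sdepthQuot {K : Type*} [Field K] {n : ℕ}
    (I J : Ideal (MvPolynomial (Fin n) K)) : ℕ :=
  sSup {d : ℕ | ∃ P : Finset ((Fin n → ℕ) × Finset (Fin n)),
    (∀ p ∈ P, d ≤ p.2.card) ∧
    ∀ c : Fin n → ℕ, (c ∈ monSet J ∧ c ∉ monSet I) ↔
      ∃! p, p ∈ P ∧ c ∈ stanleyInterval p.1 p.2}

section Aux

variable {K : Type*} [Field K] {n : ℕ}

lemma X_mul_X_eq (a b : Fin n) :
    (X a * X b : MvPolynomial (Fin n) K) =
      monomial (Finsupp.single a 1 + Finsupp.single b 1) 1 := by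
  rw [show (X a : MvPolynomial (Fin n) K) = monomial (Finsupp.single a 1) 1 from rfl,
    show (X b : MvPolynomial (Fin n) K) = monomial (Finsupp.single b 1) 1 from rfl,
    monomial_mul, one_mul]

lemma pair_le {a b : Fin n} (hab : a ≠ b) (c : Fin n →₀ ℕ) :
    Finsupp.single a 1 + Finsupp.single b 1 ≤ c ↔ 1 ≤ c a ∧ 1 ≤ c b := by
  rw [Finsupp.le_def]
  constructor
  · intro h
    have ha := h a
    have hb := h b
    rw [Finsupp.add_apply, Finsupp.single_eq_same, Finsupp.single_eq_of_ne' (Ne.symm hab)] at ha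
    rw [Finsupp.add_apply, Finsupp.single_eq_same, Finsupp.single_eq_of_ne' hab] at hb
    exact ⟨by omega, by omega⟩
  · rintro ⟨h1, h2⟩ x
    rw [Finsupp.add_apply]
    rcases eq_or_ne a x with rfl | hax
    · rw [Finsupp.single_eq_same, Finsupp.single_eq_of_ne' (fun h => hab h.symm)]
      omega
    · rw [Finsupp.single_eq_of_ne' hax]
      rcases eq_or_ne b x with rfl | hbx
      · rw [Finsupp.single_eq_same]; omega
      · rw [Finsupp.single_eq_of_ne' hbx]; omega

lemma pathIdeal_eq_span (K : Type*) [Field K] (n k : ℕ) :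
    pathIdeal K n k = Ideal.span ((fun s => monomial s (1 : K)) ''
      {e : Fin n →₀ ℕ | ∃ a b : Fin n, (a : ℕ) < b ∧ (b : ℕ) - a ≤ k ∧
        e = Finsupp.single a 1 + Finsupp.single b 1}) := by
  unfold pathIdeal
  congr 1
  ext p
  constructor
  · rintro ⟨a, b, h1, h2, rfl⟩
    exact ⟨_, ⟨a, b, h1, h2, rfl⟩, (X_mul_X_eq a b).symm⟩
  · rintro ⟨e, ⟨a, b, h1, h2, rfl⟩, rfl⟩
    exact ⟨a, b, h1, h2, (X_mul_X_eq a b).symm⟩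

lemma pathIdealOn_eq_span (K : Type*) [Field K] (n k a b : ℕ) :
    pathIdealOn K n k a b = Ideal.span ((fun s => monomial s (1 : K)) ''
      {e : Fin n →₀ ℕ | ∃ x y : Fin n, a ≤ (x : ℕ) + 1 ∧ (y : ℕ) + 1 ≤ b ∧ (x : ℕ) < y ∧
        (y : ℕ) - x ≤ k ∧ e = Finsupp.single x 1 + Finsupp.single y 1}) := by
  unfold pathIdealOn
  congr 1
  ext p
  constructor
  · rintro ⟨x, y, h1, h2, h3, h4, rfl⟩
    exact ⟨_, ⟨x, y, h1, h2, h3, h4, rfl⟩, (X_mul_X_eq x y).symm⟩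
  · rintro ⟨e, ⟨x, y, h1, h2, h3, h4, rfl⟩, rfl⟩
    exact ⟨x, y, h1, h2, h3, h4, (X_mul_X_eq x y).symm⟩

lemma varSpan_eq_span (K : Type*) [Field K] (n a b : ℕ) :
    varSpan K n a b = Ideal.span ((fun s => monomial s (1 : K)) ''
      {e : Fin n →₀ ℕ | ∃ t : Fin n, a ≤ (t : ℕ) + 1 ∧ (t : ℕ) + 1 ≤ b ∧
        e = Finsupp.single t 1}) := by
  unfold varSpan
  congr 1
  ext p
  constructor
  · rintro ⟨t, h1, h2, rfl⟩
    exact ⟨_, ⟨t, h1, h2, rfl⟩, rfl⟩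
  · rintro ⟨e, ⟨t, h1, h2, rfl⟩, rfl⟩
    exact ⟨t, h1, h2, rfl⟩

lemma key_equiv (n k i : ℕ) (hk : 2 ≤ k) (hi : i ≤ k - 1) (hn : 3 * k + 2 ≤ n)
    (v : Fin n) (hv : (v : ℕ) = n - k + i - 1) (m : Fin n →₀ ℕ) :
    (∃ e ∈ {e : Fin n →₀ ℕ | ∃ a b : Fin n, (a : ℕ) < b ∧ (b : ℕ) - a ≤ k ∧
        e = Finsupp.single a 1 + Finsupp.single b 1},
      e ≤ m + Finsupp.single v 1) ↔
    (∃ f ∈ {e : Fin n →₀ ℕ | ∃ x y : Fin n, 1 ≤ (x : ℕ) + 1 ∧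
          (y : ℕ) + 1 ≤ n - 2 * k - 1 + i ∧ (x : ℕ) < y ∧
          (y : ℕ) - x ≤ k ∧ e = Finsupp.single x 1 + Finsupp.single y 1} ∪
        ({e : Fin n →₀ ℕ | ∃ t : Fin n, n - 2 * k + i ≤ (t : ℕ) + 1 ∧
            (t : ℕ) + 1 ≤ n - k + i - 1 ∧ e = Finsupp.single t 1} ∪
          {e : Fin n →₀ ℕ | ∃ t : Fin n, n - k + i + 1 ≤ (t : ℕ) + 1 ∧
            (t : ℕ) + 1 ≤ n ∧ e = Finsupp.single t 1}),
      f ≤ m) := by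
  constructor
  · rintro ⟨e, ⟨a, b, h1, h2, rfl⟩, hle⟩
    have hab : a ≠ b := fun h => by simp [h] at h1
    rw [pair_le hab] at hle
    obtain ⟨hma, hmb⟩ := hle
    rw [Finsupp.add_apply] at hma hmb
    by_cases hbv : b = v
    · subst hbv
      have hav : a ≠ b := hab
      rw [Finsupp.single_eq_of_ne' (fun h => hab h.symm)] at hma
      refine ⟨Finsupp.single a 1, Or.inr (Or.inl ⟨a, by omega, by omega, rfl⟩),
        Finsupp.single_le_iff.mpr (by omega)⟩
    · by_cases hav : a = v
      · subst hav
        rw [Finsupp.single_eq_of_ne' (fun h => hbv h.symm)] at hmb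
        have hbn := b.isLt
        exact ⟨Finsupp.single b 1, Or.inr (Or.inr ⟨b, by omega, by omega, rfl⟩),
          Finsupp.single_le_iff.mpr (by omega)⟩
      · rw [Finsupp.single_eq_of_ne' (fun h => hav h.symm)] at hma
        rw [Finsupp.single_eq_of_ne' (fun h => hbv h.symm)] at hmb
        by_cases hsmall : (b : ℕ) + 1 ≤ n - 2 * k - 1 + i
        · exact ⟨Finsupp.single a 1 + Finsupp.single b 1,
            Or.inl ⟨a, b, by omega, hsmall, h1, h2, rfl⟩,
            (pair_le hab m).mpr ⟨by omega, by omega⟩⟩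
        · have hbne : (b : ℕ) ≠ n - k + i - 1 := fun h => hbv (Fin.ext (h.trans hv.symm))
          by_cases hlow : (b : ℕ) + 1 ≤ n - k + i - 1
          · exact ⟨Finsupp.single b 1, Or.inr (Or.inl ⟨b, by omega, hlow, rfl⟩),
              Finsupp.single_le_iff.mpr (by omega)⟩
          · have hbn := b.isLt
            exact ⟨Finsupp.single b 1, Or.inr (Or.inr ⟨b, by omega, by omega, rfl⟩),
              Finsupp.single_le_iff.mpr (by omega)⟩
  · rintro ⟨f, (⟨x, y, _, hy, hxy, hyk, rfl⟩ | (⟨t, ht1, ht2, rfl⟩ | ⟨t, ht1, ht2, rfl⟩)),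
      hle⟩
    · refine ⟨_, ⟨x, y, hxy, hyk, rfl⟩, hle.trans (Finsupp.le_def.mpr fun j => ?_)⟩
      rw [Finsupp.add_apply]
      omega
    · have htv : t ≠ v := fun h => by rw [h, hv] at ht2; omega
      have h1m : 1 ≤ m t := Finsupp.single_le_iff.mp hle
      refine ⟨Finsupp.single t 1 + Finsupp.single v 1,
        ⟨t, v, by omega, by omega, rfl⟩, ?_⟩
      rw [pair_le htv]
      constructor
      · rw [Finsupp.add_apply, Finsupp.single_eq_of_ne' (fun h => htv h.symm)]
        omega
      · rw [Finsupp.add_apply, Finsupp.single_eq_same]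
        omega
    · have hvt : v ≠ t := fun h => by rw [← h, hv] at ht1; omega
      have h1m : 1 ≤ m t := Finsupp.single_le_iff.mp hle
      have htn := t.isLt
      refine ⟨Finsupp.single v 1 + Finsupp.single t 1,
        ⟨v, t, by omega, by omega, rfl⟩, ?_⟩
      rw [pair_le hvt]
      constructor
      · rw [Finsupp.add_apply, Finsupp.single_eq_same]
        omega
      · rw [Finsupp.add_apply, Finsupp.single_eq_of_ne' hvt]
        omega

end Aux

theorem stmt5 (K : Type*) [Field K] (n k i : ℕ) (hk : 2 ≤ k) (hi : i ≤ k - 1)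
    (hn : 3 * k + 2 ≤ n) :
    (pathIdeal K n k).colon ((Ideal.span {X (⟨n - k + i - 1, by omega⟩ : Fin n)} : Ideal (MvPolynomial (Fin n) K)) : Set (MvPolynomial (Fin n) K)) =
      pathIdealOn K n k 1 (n - 2 * k - 1 + i) ⊔
        (varSpan K n (n - 2 * k + i) (n - k + i - 1) ⊔ varSpan K n (n - k + i + 1) n) := by
  ext p
  rw [Ideal.mem_colon_span_singleton, pathIdeal_eq_span, mem_ideal_span_monomial_image,
    pathIdealOn_eq_span, varSpan_eq_span, varSpan_eq_span, ← Ideal.span_union,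
    ← Ideal.span_union, ← Set.image_union, ← Set.image_union,
    mem_ideal_span_monomial_image]
  simp only [support_mul_X, Finset.mem_map, addRightEmbedding_apply]
  have key := key_equiv n k i hk hi hn ⟨n - k + i - 1, by omega⟩ rfl
  constructor
  · intro H m hm
    exact (key m).mp (H _ ⟨m, hm, rfl⟩)
  · rintro H x ⟨m, hm, rfl⟩
    exact (key m).mpr (H m hm)
end

section
/- Let $k \ge 2$ and $n \ge 2k+2$. Then the quotient $S/(I(P_n^k), A_{n-1})$ is isomorphic as a ring to $K[x_1,\dots,x_{n-k-1}]/I(P_{n-k-1}^k)$ adjoined the polynomial variable $x_n$, i.e., $S/(I(P_n^k),A_{n-1}) \cong \big(K[x_1,\dots,x_{n-k-1}]/I(P_{n-k-1}^k)\big)[x_n]$. -/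
open MvPolynomial

theorem stmt6 (K : Type*) [Field K] (n k : ℕ) (hk : 2 ≤ k) (hn : 2 * k + 2 ≤ n) :
    Nonempty ((MvPolynomial (Fin n) K ⧸ (pathIdeal K n k ⊔ varSpan K n (n - k) (n - 1))) ≃+*
      Polynomial (MvPolynomial (Fin (n - k - 1)) K ⧸ pathIdeal K (n - k - 1) k)) := by
  set m := n - k - 1 with hm
  have hmn : m < n := by omega
  have hn1 : n - 1 < n := by omega
  set Q' := MvPolynomial (Fin m) K ⧸ pathIdeal K m k with hQ'
  set BigI := pathIdeal K n k ⊔ varSpan K n (n - k) (n - 1) with hBigI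
  set g : Fin n → Polynomial Q' := fun t =>
    if h : (t : ℕ) < m then Polynomial.C (Ideal.Quotient.mk _ (X ⟨t, h⟩))
    else if (t : ℕ) = n - 1 then Polynomial.X else 0 with hg
  set f : MvPolynomial (Fin n) K →+* Polynomial Q' :=
    (eval₂Hom (Polynomial.C.comp (algebraMap K Q')) g) with hf
  have hker : ∀ a ∈ BigI, f a = 0 := by
    have : BigI ≤ RingHom.ker f := by
      rw [hBigI]
      apply sup_le
      · rw [pathIdeal, Ideal.span_le]
        rintro _ ⟨i, j, hij, hjk, rfl⟩
        simp only [SetLike.mem_coe, RingHom.mem_ker, map_mul, hf, eval₂Hom_X']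
        by_cases hj : (j : ℕ) < m
        · have hi : (i : ℕ) < m := lt_trans hij hj
          simp only [hg, hi, hj, dif_pos]
          rw [← map_mul, ← map_mul]
          have hmem : (X (⟨i, hi⟩ : Fin m) * X ⟨j, hj⟩ : MvPolynomial (Fin m) K) ∈
              pathIdeal K m k := by
            apply Ideal.subset_span
            exact ⟨⟨i, hi⟩, ⟨j, hj⟩, hij, hjk, rfl⟩
          rw [Ideal.Quotient.eq_zero_iff_mem.mpr hmem, map_zero]
        · by_cases hj1 : (j : ℕ) = n - 1
          · have hi : ¬ (i : ℕ) < m := by omega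
            have hi1 : ¬ (i : ℕ) = n - 1 := by omega
            simp only [hg, hi, hi1, dif_neg, if_neg, not_false_iff, zero_mul]
          · simp only [hg, hj, hj1, dif_neg, if_neg, not_false_iff, mul_zero]
      · rw [varSpan, Ideal.span_le]
        rintro _ ⟨t, h1, h2, rfl⟩
        simp only [SetLike.mem_coe, RingHom.mem_ker, hf, eval₂Hom_X']
        have ht : ¬ (t : ℕ) < m := by omega
        have ht1 : ¬ (t : ℕ) = n - 1 := by omega
        simp only [hg, ht, ht1, dif_neg, if_neg, not_false_iff]
    intro a ha
    exact this ha
  set φ : (MvPolynomial (Fin n) K ⧸ BigI) →+* Polynomial Q' :=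
    Ideal.Quotient.lift BigI f hker with hφ
  set g0 : MvPolynomial (Fin m) K →+* (MvPolynomial (Fin n) K ⧸ BigI) :=
    eval₂Hom ((Ideal.Quotient.mk BigI).comp C)
      (fun t => Ideal.Quotient.mk BigI (X ⟨t, lt_trans t.isLt hmn⟩)) with hg0
  have hker' : ∀ a ∈ pathIdeal K m k, g0 a = 0 := by
    have : pathIdeal K m k ≤ RingHom.ker g0 := by
      rw [pathIdeal, Ideal.span_le]
      rintro _ ⟨i, j, hij, hjk, rfl⟩
      simp only [SetLike.mem_coe, RingHom.mem_ker, map_mul, hg0, eval₂Hom_X']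
      rw [← map_mul, Ideal.Quotient.eq_zero_iff_mem]
      apply Ideal.mem_sup_left
      apply Ideal.subset_span
      exact ⟨⟨i, lt_trans i.isLt hmn⟩, ⟨j, lt_trans j.isLt hmn⟩, hij, hjk, rfl⟩
    intro a ha
    exact this ha
  set g1 : Q' →+* (MvPolynomial (Fin n) K ⧸ BigI) :=
    Ideal.Quotient.lift _ g0 hker' with hg1
  set ψ : Polynomial Q' →+* (MvPolynomial (Fin n) K ⧸ BigI) :=
    Polynomial.eval₂RingHom g1 (Ideal.Quotient.mk BigI (X ⟨n - 1, hn1⟩)) with hψ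
  have hg_pos : ∀ (t : Fin n) (ht : (t : ℕ) < m),
      g t = Polynomial.C (Ideal.Quotient.mk (pathIdeal K m k) (X ⟨t, ht⟩)) := by
    intro t ht
    simp only [hg]
    exact dif_pos ht
  have hg_top : ∀ (t : Fin n), ¬ (t : ℕ) < m → (t : ℕ) = n - 1 → g t = Polynomial.X := by
    intro t ht ht1
    simp only [hg]
    rw [dif_neg ht]
    exact if_pos ht1
  have hg_zero : ∀ (t : Fin n), ¬ (t : ℕ) < m → ¬ (t : ℕ) = n - 1 → g t = 0 := by
    intro t ht ht1
    simp only [hg]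
    rw [dif_neg ht]
    exact if_neg ht1
  refine ⟨RingEquiv.ofRingHom φ ψ ?_ ?_⟩
  swap
  · -- ψ ∘ φ = id on big quotient
    apply Ideal.Quotient.ringHom_ext
    apply MvPolynomial.ringHom_ext
    · intro a
      exact calc
        ψ (f (C a)) = ψ (Polynomial.C (algebraMap K Q' a)) :=
          congrArg ψ (by rw [hf, eval₂Hom_C, RingHom.comp_apply])
        _ = g1 (algebraMap K Q' a) := Polynomial.eval₂_C _ _
        _ = g0 (C a) := rfl
        _ = Ideal.Quotient.mk BigI (C a) :=
          eval₂Hom_C ((Ideal.Quotient.mk BigI).comp C) _ a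
    · intro t
      rcases lt_or_ge (t : ℕ) m with ht | ht
      · exact calc
          ψ (f (X t)) = ψ (g t) := congrArg ψ (eval₂Hom_X' _ g t)
          _ = ψ (Polynomial.C (Ideal.Quotient.mk (pathIdeal K m k) (X ⟨t, ht⟩))) :=
            congrArg ψ (hg_pos t ht)
          _ = g1 (Ideal.Quotient.mk (pathIdeal K m k) (X ⟨t, ht⟩)) := Polynomial.eval₂_C _ _
          _ = g0 (X ⟨t, ht⟩) := rfl
          _ = Ideal.Quotient.mk BigI (X ⟨(t : ℕ), lt_trans ht hmn⟩) := eval₂Hom_X' _ _ _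
          _ = Ideal.Quotient.mk BigI (X t) := rfl
      · have ht' : ¬ (t : ℕ) < m := not_lt.mpr ht
        by_cases ht1 : (t : ℕ) = n - 1
        · exact calc
            ψ (f (X t)) = ψ (g t) := congrArg ψ (eval₂Hom_X' _ g t)
            _ = ψ Polynomial.X := congrArg ψ (hg_top t ht' ht1)
            _ = Ideal.Quotient.mk BigI (X ⟨n - 1, hn1⟩) := Polynomial.eval₂_X _ _
            _ = Ideal.Quotient.mk BigI (X t) :=
              congrArg _ (congrArg X (Fin.ext ht1.symm))
        · have h0 : Ideal.Quotient.mk BigI (X t) = 0 := by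
            rw [Ideal.Quotient.eq_zero_iff_mem]
            apply Ideal.mem_sup_right
            apply Ideal.subset_span
            exact ⟨t, by omega, by omega, rfl⟩
          exact calc
            ψ (f (X t)) = ψ (g t) := congrArg ψ (eval₂Hom_X' _ g t)
            _ = ψ 0 := congrArg ψ (hg_zero t ht' ht1)
            _ = 0 := map_zero ψ
            _ = Ideal.Quotient.mk BigI (X t) := h0.symm
  · -- φ ∘ ψ = id on Polynomial Q'
    apply Polynomial.ringHom_ext'
    · apply Ideal.Quotient.ringHom_ext
      apply MvPolynomial.ringHom_ext
      · intro a
        exact calc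
          φ (ψ (Polynomial.C (Ideal.Quotient.mk (pathIdeal K m k) (C a))))
              = φ (g1 (Ideal.Quotient.mk (pathIdeal K m k) (C a))) :=
            congrArg φ (Polynomial.eval₂_C _ _)
          _ = φ (g0 (C a)) := rfl
          _ = φ (Ideal.Quotient.mk BigI (C a)) :=
            congrArg φ (eval₂Hom_C ((Ideal.Quotient.mk BigI).comp C) _ a)
          _ = f (C a) := rfl
          _ = Polynomial.C (algebraMap K Q' a) :=
            by rw [hf, eval₂Hom_C, RingHom.comp_apply]
          _ = Polynomial.C (Ideal.Quotient.mk (pathIdeal K m k) (C a)) := rfl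
      · intro t
        have ht : ((⟨(t : ℕ), lt_trans t.isLt hmn⟩ : Fin n) : ℕ) < m := t.isLt
        exact calc
          φ (ψ (Polynomial.C (Ideal.Quotient.mk (pathIdeal K m k) (X t))))
              = φ (g1 (Ideal.Quotient.mk (pathIdeal K m k) (X t))) :=
            congrArg φ (Polynomial.eval₂_C _ _)
          _ = φ (g0 (X t)) := rfl
          _ = φ (Ideal.Quotient.mk BigI (X ⟨(t : ℕ), lt_trans t.isLt hmn⟩)) :=
            congrArg φ (eval₂Hom_X' _ _ t)
          _ = f (X ⟨(t : ℕ), lt_trans t.isLt hmn⟩) := rfl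
          _ = g ⟨(t : ℕ), lt_trans t.isLt hmn⟩ := eval₂Hom_X' _ g _
          _ = Polynomial.C (Ideal.Quotient.mk (pathIdeal K m k) (X ⟨(t : ℕ), ht⟩)) :=
            hg_pos _ ht
          _ = Polynomial.C (Ideal.Quotient.mk (pathIdeal K m k) (X t)) := rfl
    · have h1 : ¬ (((⟨n - 1, hn1⟩ : Fin n)) : ℕ) < m := by simp only [hm]; omega
      exact calc
        φ (ψ Polynomial.X) = φ (Ideal.Quotient.mk BigI (X ⟨n - 1, hn1⟩)) :=
          congrArg φ (Polynomial.eval₂_X _ _)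
        _ = f (X ⟨n - 1, hn1⟩) := rfl
        _ = g ⟨n - 1, hn1⟩ := eval₂Hom_X' _ g _
        _ = Polynomial.X := hg_top _ h1 rfl
end

section
/- Let $k \ge 2$ and $n \ge 3k+2$. Then $S/(I(C_n^k), A_{n-1})$ is isomorphic to $K[x_1,\dots,x_{n-k}]/I(P_{n-k}^k)$ (after renumbering variables), where $A_{n-1} = (x_{n-k},\dots,x_{n-1})$. -/
open MvPolynomial

namespace Stmt12Aux

noncomputable def fwd (K : Type*) [Field K] (n k : ℕ) : MvPolynomial (Fin n) K →ₐ[K]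
    MvPolynomial (Fin (n - k)) K ⧸ pathIdeal K (n - k) k :=
  aeval fun t => if h : (t : ℕ) + 1 < n - k then
      Ideal.Quotient.mk _ (X ⟨(t : ℕ) + 1, h⟩)
    else if h2 : (t : ℕ) = n - 1 ∧ 0 < n - k then Ideal.Quotient.mk _ (X ⟨0, h2.2⟩)
    else 0

noncomputable def bwd (K : Type*) [Field K] (n k : ℕ) : MvPolynomial (Fin (n - k)) K →ₐ[K]
    MvPolynomial (Fin n) K ⧸ (cycleIdeal K n k ⊔ varSpan K n (n - k) (n - 1)) :=
  aeval fun m => if (m : ℕ) = 0 then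
      Ideal.Quotient.mk _ (X (⟨n - 1, by have := m.isLt; omega⟩ : Fin n))
    else Ideal.Quotient.mk _ (X (⟨(m : ℕ) - 1, by have := m.isLt; omega⟩ : Fin n))

theorem fwd_X_small {K : Type*} [Field K] {n k : ℕ} (t : Fin n) (h : (t : ℕ) + 1 < n - k) :
    fwd K n k (X t) = Ideal.Quotient.mk _ (X ⟨(t : ℕ) + 1, h⟩) := by
  rw [fwd, aeval_X, dif_pos h]

theorem fwd_X_top {K : Type*} [Field K] {n k : ℕ} (t : Fin n) (h1 : (t : ℕ) = n - 1)
    (h2 : 0 < n - k) :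
    fwd K n k (X t) = Ideal.Quotient.mk _ (X ⟨0, h2⟩) := by
  rw [fwd, aeval_X, dif_neg (by omega), dif_pos ⟨h1, h2⟩]

theorem fwd_X_dead {K : Type*} [Field K] {n k : ℕ} (t : Fin n) (h : ¬ ((t : ℕ) + 1 < n - k))
    (h2 : (t : ℕ) ≠ n - 1) : fwd K n k (X t) = 0 := by
  rw [fwd, aeval_X, dif_neg h, dif_neg (by tauto)]

theorem bwd_X_zero {K : Type*} [Field K] {n k : ℕ} (m : Fin (n - k)) (h : (m : ℕ) = 0) :
    bwd K n k (X m) =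
      Ideal.Quotient.mk _ (X (⟨n - 1, by have := m.isLt; omega⟩ : Fin n)) := by
  rw [bwd, aeval_X, if_pos h]

theorem bwd_X_pos {K : Type*} [Field K] {n k : ℕ} (m : Fin (n - k)) (h : (m : ℕ) ≠ 0) :
    bwd K n k (X m) =
      Ideal.Quotient.mk _ (X (⟨(m : ℕ) - 1, by have := m.isLt; omega⟩ : Fin n)) := by
  rw [bwd, aeval_X, if_neg h]

theorem mem_path {K : Type*} [Field K] {N k : ℕ} (a b : Fin N) (h : (a : ℕ) < b)
    (h2 : (b : ℕ) - a ≤ k) :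
    Ideal.Quotient.mk (pathIdeal K N k) (X a * X b) = 0 := by
  rw [Ideal.Quotient.eq_zero_iff_mem]
  exact Ideal.subset_span ⟨a, b, h, h2, rfl⟩

theorem fwd_vanish (K : Type*) [Field K] (n k : ℕ) (hk : 2 ≤ k) (hn : 3 * k + 2 ≤ n) :
    ∀ a ∈ cycleIdeal K n k ⊔ varSpan K n (n - k) (n - 1), fwd K n k a = 0 := by
  have hker : cycleIdeal K n k ⊔ varSpan K n (n - k) (n - 1) ≤
      RingHom.ker (fwd K n k).toRingHom := by
    rw [cycleIdeal, varSpan, ← Ideal.span_union, Ideal.span_le]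
    rintro m (⟨i, j, hij, hed, rfl⟩ | ⟨t, ht1, ht2, rfl⟩)
    · have hi := i.isLt
      have hj := j.isLt
      simp only [SetLike.mem_coe, RingHom.mem_ker, AlgHom.toRingHom_eq_coe, RingHom.coe_coe,
        map_mul]
      by_cases hjs : (j : ℕ) + 1 < n - k
      · have his : (i : ℕ) + 1 < n - k := by omega
        rw [fwd_X_small i his, fwd_X_small j hjs, ← map_mul]
        exact mem_path ⟨(i : ℕ) + 1, his⟩ ⟨(j : ℕ) + 1, hjs⟩ (by simpa using hij)
          (by simp only []; omega)
      · by_cases hjn : (j : ℕ) = n - 1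
        · by_cases his : (i : ℕ) + 1 < n - k
          · have hik : (i : ℕ) + 1 ≤ k := by omega
            rw [fwd_X_small i his, fwd_X_top j hjn (by omega), ← map_mul, mul_comm]
            exact mem_path ⟨0, by omega⟩ ⟨(i : ℕ) + 1, his⟩ (by simp) (by simp only []; omega)
          · rw [fwd_X_dead i his (by omega), zero_mul]
        · rw [fwd_X_dead j hjs hjn, mul_zero]
    · have ht := t.isLt
      simp only [SetLike.mem_coe, RingHom.mem_ker, AlgHom.toRingHom_eq_coe, RingHom.coe_coe]
      exact fwd_X_dead t (by omega) (by omega)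
  exact fun a ha => hker ha

theorem bwd_vanish (K : Type*) [Field K] (n k : ℕ) (hk : 2 ≤ k) (hn : 3 * k + 2 ≤ n) :
    ∀ a ∈ pathIdeal K (n - k) k, bwd K n k a = 0 := by
  have hker : pathIdeal K (n - k) k ≤ RingHom.ker (bwd K n k).toRingHom := by
    rw [pathIdeal, Ideal.span_le]
    rintro m ⟨i, j, hij, hed, rfl⟩
    have hi := i.isLt
    have hj := j.isLt
    simp only [SetLike.mem_coe, RingHom.mem_ker, AlgHom.toRingHom_eq_coe, RingHom.coe_coe,
      map_mul]
    by_cases hi0 : (i : ℕ) = 0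
    · rw [bwd_X_zero i hi0, bwd_X_pos j (by omega), ← map_mul, Ideal.Quotient.eq_zero_iff_mem]
      apply Ideal.mem_sup_left
      refine Ideal.subset_span ⟨⟨(j : ℕ) - 1, by omega⟩, ⟨n - 1, by omega⟩,
        by simp only []; omega, Or.inr (by simp only []; omega), by rw [mul_comm]⟩
    · rw [bwd_X_pos i hi0, bwd_X_pos j (by omega), ← map_mul, Ideal.Quotient.eq_zero_iff_mem]
      apply Ideal.mem_sup_left
      exact Ideal.subset_span ⟨⟨(i : ℕ) - 1, by omega⟩, ⟨(j : ℕ) - 1, by omega⟩,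
        by simp only []; omega, Or.inl (by simp only []; omega), rfl⟩
  exact fun a ha => hker ha

end Stmt12Aux


open Stmt12Aux in
theorem stmt12 (K : Type*) [Field K] (n k : ℕ) (hk : 2 ≤ k) (hn : 3 * k + 2 ≤ n) :
    Nonempty ((MvPolynomial (Fin n) K ⧸ (cycleIdeal K n k ⊔ varSpan K n (n - k) (n - 1))) ≃+*
      (MvPolynomial (Fin (n - k)) K ⧸ pathIdeal K (n - k) k)) := by
  set I1 := cycleIdeal K n k ⊔ varSpan K n (n - k) (n - 1) with hI1
  set I2 := pathIdeal K (n - k) k with hI2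
  let F : (MvPolynomial (Fin n) K ⧸ I1) →ₐ[K] MvPolynomial (Fin (n - k)) K ⧸ I2 :=
    Ideal.Quotient.liftₐ I1 (fwd K n k) (fwd_vanish K n k hk hn)
  let G : (MvPolynomial (Fin (n - k)) K ⧸ I2) →ₐ[K] MvPolynomial (Fin n) K ⧸ I1 :=
    Ideal.Quotient.liftₐ I2 (bwd K n k) (bwd_vanish K n k hk hn)
  have hFmk : ∀ p : MvPolynomial (Fin n) K, F (Ideal.Quotient.mk I1 p) = fwd K n k p :=
    fun p => by simp [F, Ideal.Quotient.liftₐ_apply]; exact Ideal.Quotient.lift_mk _ _ _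
  have hGmk : ∀ p : MvPolynomial (Fin (n - k)) K, G (Ideal.Quotient.mk I2 p) = bwd K n k p :=
    fun p => by simp [G, Ideal.Quotient.liftₐ_apply]; exact Ideal.Quotient.lift_mk _ _ _
  refine ⟨(AlgEquiv.ofAlgHom F G ?_ ?_).toRingEquiv⟩
  · apply Ideal.Quotient.algHom_ext
    apply MvPolynomial.algHom_ext
    intro m
    have hm := m.isLt
    simp only [AlgHom.comp_apply, Ideal.Quotient.mkₐ_eq_mk, AlgHom.id_apply]
    rw [hGmk]
    by_cases hm0 : (m : ℕ) = 0
    · rw [bwd_X_zero m hm0, hFmk, fwd_X_top _ (by simp) (by omega)]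
      congr 2
      exact Fin.ext (by simp [hm0])
    · rw [bwd_X_pos m hm0, hFmk, fwd_X_small _ (by simp only []; omega)]
      congr 2
      exact Fin.ext (by simp only []; omega)
  · apply Ideal.Quotient.algHom_ext
    apply MvPolynomial.algHom_ext
    intro t
    have ht := t.isLt
    simp only [AlgHom.comp_apply, Ideal.Quotient.mkₐ_eq_mk, AlgHom.id_apply]
    rw [hFmk]
    by_cases hts : (t : ℕ) + 1 < n - k
    · rw [fwd_X_small t hts, hGmk, bwd_X_pos _ (by simp)]
      congr 2
    · by_cases htn : (t : ℕ) = n - 1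
      · rw [fwd_X_top t htn (by omega), hGmk, bwd_X_zero _ (by simp)]
        congr 2
        exact Fin.ext (by simp [htn])
      · rw [fwd_X_dead t hts htn, map_zero]
        symm
        rw [Ideal.Quotient.eq_zero_iff_mem]
        apply Ideal.mem_sup_right
        exact Ideal.subset_span ⟨t, by omega, by omega, rfl⟩
end
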